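/- K_{2,p} vanishes exactly on degenerate quadratic forms: for π ∈ H_2, K_{2,p}(π) = 0 if and only if π(x,y) = λ(αx + βy)² for some reals λ, α, β. -/

import Mathlib

open MeasureTheory

noncomputable section

/-- evaluation of the binary form of degree `m` with coefficients `a` -/
def formEval (m : ℕ) (a : Fin (m + 1) → ℝ) (z : ℝ × ℝ) : ℝ :=
  ∑ i : Fin (m + 1), a i * z.1 ^ (i : ℕ) * z.2 ^ (m - (i : ℕ))

/-- `π` is a binary homogeneous form of degree `m` (an element of H_m) -/
def IsForm (m : ℕ) (π : ℝ × ℝ → ℝ) : Prop :=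
  ∃ a : Fin (m + 1) → ℝ, ∀ z, π z = formEval m a z

/-- `p` is (the evaluation of) a polynomial of total degree at most `n` -/
def IsPolyDeg (n : ℕ) (p : ℝ × ℝ → ℝ) : Prop :=
  ∃ q : MvPolynomial (Fin 2) ℝ, q.totalDegree ≤ n ∧
    ∀ z : ℝ × ℝ, p z = MvPolynomial.eval ![z.1, z.2] q

/-- the Lagrange interpolation nodes of degree `m - 1` on the triangle with vertices
`T 0, T 1, T 2`: the points whose barycentric coordinates lie in {0, 1/(m−1), …, 1} -/
def interpNodes (m : ℕ) (T : Fin 3 → ℝ × ℝ) : Set (ℝ × ℝ) :=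
  { z | ∃ k : Fin 3 → ℕ, (∑ i, k i) = m - 1 ∧
      z = ∑ i, ((k i : ℝ) / ((m : ℝ) - 1)) • T i }

/-- `p` is the degree `m - 1` Lagrange interpolant of `v` on the triangle `T` -/
def IsInterpolant (m : ℕ) (T : Fin 3 → ℝ × ℝ) (v p : ℝ × ℝ → ℝ) : Prop :=
  IsPolyDeg (m - 1) p ∧ ∀ z ∈ interpNodes m T, p z = v z

/-- the Lagrange interpolation operator `I_{m,T}` of degree `m - 1` on the triangle `T` -/
def interp (m : ℕ) (T : Fin 3 → ℝ × ℝ) (v : ℝ × ℝ → ℝ) : ℝ × ℝ → ℝ := by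
  classical exact if h : ∃ p, IsInterpolant m T v p then h.choose else 0

/-- the (closed) triangle with vertices `T 0, T 1, T 2` -/
def triangleSet (T : Fin 3 → ℝ × ℝ) : Set (ℝ × ℝ) := convexHull ℝ (Set.range T)

/-- the area of the triangle with vertices `T 0, T 1, T 2` -/
def triArea (T : Fin 3 → ℝ × ℝ) : ℝ :=
  |((T 1).1 - (T 0).1) * ((T 2).2 - (T 0).2) -
    ((T 2).1 - (T 0).1) * ((T 1).2 - (T 0).2)| / 2

/-- the interpolation error `‖v − I_{m,T} v‖_{L^p(T)}` -/
def lpErr (m : ℕ) (p : ℝ) (T : Fin 3 → ℝ × ℝ) (v : ℝ × ℝ → ℝ) : ℝ :=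
  (∫ z in triangleSet T, |v z - interp m T v z| ^ p) ^ (1 / p)

/-- the interpolation error `‖v − I_{m,T} v‖_{L^∞(T)}` -/
def supErr (m : ℕ) (T : Fin 3 → ℝ × ℝ) (v : ℝ × ℝ → ℝ) : ℝ :=
  sSup ((fun z => |v z - interp m T v z|) '' triangleSet T)

/-- the shape function `K_{m,p}(π) = inf_{|T|=1} ‖π − I_{m,T} π‖_{L^p(T)}` -/
def Kfun (m : ℕ) (p : ℝ) (π : ℝ × ℝ → ℝ) : ℝ :=
  sInf { e | ∃ T : Fin 3 → ℝ × ℝ, triArea T = 1 ∧ e = lpErr m p T π }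


lemma mem_interpNodes_two (T : Fin 3 → ℝ × ℝ) (z : ℝ × ℝ) :
    z ∈ interpNodes 2 T ↔ z = T 0 ∨ z = T 1 ∨ z = T 2 := by
  constructor
  · rintro ⟨k, hk, rfl⟩
    have hk' : k 0 + k 1 + k 2 = 1 := by simpa [Fin.sum_univ_three] using hk
    have hcase : (k 0 = 1 ∧ k 1 = 0 ∧ k 2 = 0) ∨ (k 0 = 0 ∧ k 1 = 1 ∧ k 2 = 0) ∨
        (k 0 = 0 ∧ k 1 = 0 ∧ k 2 = 1) := by omega
    rcases hcase with ⟨h0,h1,h2⟩|⟨h0,h1,h2⟩|⟨h0,h1,h2⟩ <;>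
      simp [Fin.sum_univ_three, h0, h1, h2] <;> norm_num
  · intro h
    rcases h with h|h|h
    · exact ⟨fun i => if i = 0 then 1 else 0, by simp [Fin.sum_univ_three],
        by simp [Fin.sum_univ_three, h]; norm_num⟩
    · exact ⟨fun i => if i = 1 then 1 else 0, by simp [Fin.sum_univ_three],
        by simp [Fin.sum_univ_three, h]; norm_num⟩
    · exact ⟨fun i => if i = 2 then 1 else 0, by simp [Fin.sum_univ_three],
        by simp [Fin.sum_univ_three, h]; norm_num⟩

lemma affine_of_isPolyDeg_one {f : ℝ × ℝ → ℝ} (h : IsPolyDeg 1 f) :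
    ∃ a b c : ℝ, ∀ z : ℝ × ℝ, f z = a * z.1 + b * z.2 + c := by
  classical
  obtain ⟨q, hdeg, hev⟩ := h
  refine ⟨q.coeff (Finsupp.single 0 1), q.coeff (Finsupp.single 1 1), q.coeff 0, ?_⟩
  intro z
  rw [hev z, MvPolynomial.eval_eq']
  have hsub : q.support ⊆ {Finsupp.single 0 1, Finsupp.single 1 1, (0 : Fin 2 →₀ ℕ)} := by
    intro d hd
    have hle : (d.sum fun _ e => e) ≤ 1 := le_trans (MvPolynomial.le_totalDegree hd) hdeg
    have hsum : d 0 + d 1 ≤ 1 := by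
      have h2 : (d.sum fun _ e => e) = ∑ i : Fin 2, d i :=
        Finsupp.sum_fintype d (fun _ e => e) (fun _ => rfl)
      rw [h2, Fin.sum_univ_two] at hle
      exact hle
    have hcase : (d 0 = 1 ∧ d 1 = 0) ∨ (d 0 = 0 ∧ d 1 = 1) ∨ (d 0 = 0 ∧ d 1 = 0) := by omega
    simp only [Finset.mem_insert, Finset.mem_singleton]
    rcases hcase with ⟨h0,h1⟩|⟨h0,h1⟩|⟨h0,h1⟩
    · left; ext i; fin_cases i <;> simp [h0, h1]
    · right; left; ext i; fin_cases i <;> simp [h0, h1]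
    · right; right; ext i; fin_cases i <;> simp [h0, h1]
  rw [Finset.sum_subset hsub (fun d _ hd => by
    simp [MvPolynomial.notMem_support_iff.mp hd])]
  have h01 : (Finsupp.single 0 1 : Fin 2 →₀ ℕ) ≠ Finsupp.single 1 1 := by
    intro hcontra
    have := DFunLike.congr_fun hcontra 0
    simp [Finsupp.single_apply] at this
  have h00 : (Finsupp.single 0 1 : Fin 2 →₀ ℕ) ≠ 0 := by
    intro hcontra
    have := DFunLike.congr_fun hcontra 0
    simp [Finsupp.single_apply] at this
  have h10 : (Finsupp.single 1 1 : Fin 2 →₀ ℕ) ≠ 0 := by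
    intro hcontra
    have := DFunLike.congr_fun hcontra 1
    simp [Finsupp.single_apply] at this
  rw [Finset.sum_insert (by simp [h01, h00]), Finset.sum_insert (by simp [h10]),
    Finset.sum_singleton]
  simp [Fin.prod_univ_two, Finsupp.single_apply]
  ring

lemma isPolyDeg_one_affine (a b c : ℝ) :
    IsPolyDeg 1 (fun z : ℝ × ℝ => a * z.1 + b * z.2 + c) := by
  refine ⟨MvPolynomial.C a * MvPolynomial.X 0 + MvPolynomial.C b * MvPolynomial.X 1 +
    MvPolynomial.C c, ?_, ?_⟩
  · apply le_trans (MvPolynomial.totalDegree_add _ _)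
    simp only [max_le_iff]
    constructor
    · apply le_trans (MvPolynomial.totalDegree_add _ _)
      simp only [max_le_iff]
      constructor <;>
      · apply le_trans (MvPolynomial.totalDegree_mul _ _)
        simp [MvPolynomial.totalDegree_X, MvPolynomial.totalDegree_C]
    · simp [MvPolynomial.totalDegree_C]
  · intro z
    simp


/-- determinant of the triangle's edge matrix -/
def tdet (T : Fin 3 → ℝ × ℝ) : ℝ :=
  ((T 1).1 - (T 0).1) * ((T 2).2 - (T 0).2) - ((T 2).1 - (T 0).1) * ((T 1).2 - (T 0).2)

lemma cramer_solves (x0 y0 x1 y1 x2 y2 v0 v1 v2 : ℝ)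
    (hdet : (x1-x0)*(y2-y0) - (x2-x0)*(y1-y0) ≠ 0) :
    ∃ a b c : ℝ, (a*x0 + b*y0 + c = v0) ∧ (a*x1 + b*y1 + c = v1) ∧ (a*x2 + b*y2 + c = v2) := by
  set D := (x1-x0)*(y2-y0) - (x2-x0)*(y1-y0) with hD
  refine ⟨((v1 - v0) * (y2 - y0) - (v2 - v0) * (y1 - y0)) / D,
    ((x1 - x0) * (v2 - v0) - (x2 - x0) * (v1 - v0)) / D,
    v0 - (((v1 - v0) * (y2 - y0) - (v2 - v0) * (y1 - y0)) / D) * x0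
       - (((x1 - x0) * (v2 - v0) - (x2 - x0) * (v1 - v0)) / D) * y0, ?_, ?_, ?_⟩
  · ring
  · field_simp
    ring
  · field_simp
    ring

lemma exists_interpolant_two (T : Fin 3 → ℝ × ℝ) (hdet : tdet T ≠ 0) (v : ℝ × ℝ → ℝ) :
    ∃ q, IsInterpolant 2 T v q := by
  obtain ⟨a, b, c, h0, h1, h2⟩ := cramer_solves (T 0).1 (T 0).2 (T 1).1 (T 1).2 (T 2).1 (T 2).2
    (v (T 0)) (v (T 1)) (v (T 2)) hdet
  refine ⟨fun z => a * z.1 + b * z.2 + c, isPolyDeg_one_affine a b c, ?_⟩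
  intro z hz
  rcases (mem_interpNodes_two T z).mp hz with h|h|h <;> subst h <;> assumption

lemma interp_two_spec (T : Fin 3 → ℝ × ℝ) (hdet : tdet T ≠ 0) (v : ℝ × ℝ → ℝ) :
    IsInterpolant 2 T v (interp 2 T v) := by
  have h : ∃ q, IsInterpolant 2 T v q := exists_interpolant_two T hdet v
  unfold interp
  rw [dif_pos h]
  exact h.choose_spec

/-- the key algebraic identity for the interpolation error -/
lemma error_formula (A B C a b c x0 y0 x1 y1 x2 y2 s t : ℝ)
    (h0 : A*x0^2 + B*x0*y0 + C*y0^2 = a*x0 + b*y0 + c)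
    (h1 : A*x1^2 + B*x1*y1 + C*y1^2 = a*x1 + b*y1 + c)
    (h2 : A*x2^2 + B*x2*y2 + C*y2^2 = a*x2 + b*y2 + c) :
    A*(x0+s*(x1-x0)+t*(x2-x0))^2 + B*(x0+s*(x1-x0)+t*(x2-x0))*(y0+s*(y1-y0)+t*(y2-y0))
      + C*(y0+s*(y1-y0)+t*(y2-y0))^2
      - (a*(x0+s*(x1-x0)+t*(x2-x0)) + b*(y0+s*(y1-y0)+t*(y2-y0)) + c)
    = (A*(x1-x0)^2 + B*(x1-x0)*(y1-y0) + C*(y1-y0)^2) * s * (s-1)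
    + (2*A*(x1-x0)*(x2-x0) + B*((x1-x0)*(y2-y0)+(y1-y0)*(x2-x0)) + 2*C*(y1-y0)*(y2-y0)) * s * t
    + (A*(x2-x0)^2 + B*(x2-x0)*(y2-y0) + C*(y2-y0)^2) * t * (t-1) := by
  linear_combination (1-s-t)*h0 + s*h1 + t*h2

/-- determinant identity: 4uv − w2² = (4AC − B²) det² -/
lemma det_identity (A B C d11 d12 d21 d22 : ℝ) :
    4 * ((A*d11^2 + B*d11*d12 + C*d12^2) * (A*d21^2 + B*d21*d22 + C*d22^2))
      - (2*A*d11*d21 + B*(d11*d22 + d12*d21) + 2*C*d12*d22)^2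
    = (4*A*C - B^2) * (d11*d22 - d21*d12)^2 := by ring


def tparam (T : Fin 3 → ℝ × ℝ) : ℝ × ℝ → ℝ × ℝ :=
  fun st => T 0 + st.1 • (T 1 - T 0) + st.2 • (T 2 - T 0)

def stdTri : Set (ℝ × ℝ) := {st : ℝ × ℝ | 0 ≤ st.1 ∧ 0 ≤ st.2 ∧ st.1 + st.2 ≤ 1}

lemma tparam_fst (T : Fin 3 → ℝ × ℝ) (st : ℝ × ℝ) :
    (tparam T st).1 = (T 0).1 + st.1 * ((T 1).1 - (T 0).1) + st.2 * ((T 2).1 - (T 0).1) := by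
  simp [tparam]

lemma tparam_snd (T : Fin 3 → ℝ × ℝ) (st : ℝ × ℝ) :
    (tparam T st).2 = (T 0).2 + st.1 * ((T 1).2 - (T 0).2) + st.2 * ((T 2).2 - (T 0).2) := by
  simp [tparam]

lemma volume_tparam_image (T : Fin 3 → ℝ × ℝ) (s : Set (ℝ × ℝ)) :
    volume (tparam T '' s) = ENNReal.ofReal |tdet T| * volume s := by
  set M : Matrix (Fin 2) (Fin 2) ℝ :=
    !![(T 1).1 - (T 0).1, (T 2).1 - (T 0).1; (T 1).2 - (T 0).2, (T 2).2 - (T 0).2] with hM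
  set L := Matrix.toLin (Module.Basis.finTwoProd ℝ) (Module.Basis.finTwoProd ℝ) M with hL
  have himg : tparam T '' s = (fun x => T 0 + x) '' (L '' s) := by
    rw [← Set.image_comp]
    apply Set.image_congr'
    intro st
    have := Matrix.toLin_finTwoProd_apply ((T 1).1 - (T 0).1) ((T 2).1 - (T 0).1)
      ((T 1).2 - (T 0).2) ((T 2).2 - (T 0).2) st
    simp only [Function.comp_apply, hL, hM, this]
    apply Prod.ext <;> simp [tparam] <;> ring
  rw [himg, Set.image_add_left, measure_preimage_add,
    Measure.addHaar_image_linearMap, hL, LinearMap.det_toLin, hM,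
    Matrix.det_fin_two_of]
  rfl

lemma triangleSet_eq (T : Fin 3 → ℝ × ℝ) : triangleSet T = tparam T '' stdTri := by
  apply Set.Subset.antisymm
  · apply convexHull_min
    · rintro z ⟨i, rfl⟩
      fin_cases i
      · exact ⟨(0, 0), ⟨le_refl 0, le_refl 0, by norm_num⟩, by simp [tparam]⟩
      · exact ⟨(1, 0), ⟨zero_le_one, le_refl 0, by norm_num⟩, by simp [tparam]⟩
      · exact ⟨(0, 1), ⟨le_refl 0, zero_le_one, by norm_num⟩, by simp [tparam]⟩
    · rintro x ⟨u, hu, rfl⟩ y ⟨w, hw, rfl⟩ a b ha hb hab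
      refine ⟨a • u + b • w, ⟨?_, ?_, ?_⟩, ?_⟩
      · simp only [Prod.fst_add, Prod.smul_fst, smul_eq_mul]
        nlinarith [hu.1, hw.1]
      · simp only [Prod.snd_add, Prod.smul_snd, smul_eq_mul]
        nlinarith [hu.2.1, hw.2.1]
      · simp only [Prod.fst_add, Prod.snd_add, Prod.smul_fst, Prod.smul_snd, smul_eq_mul]
        nlinarith [hu.2.2, hw.2.2]
      · apply Prod.ext
        · simp only [tparam_fst, Prod.fst_add, Prod.smul_fst, Prod.snd_add, Prod.smul_snd,
            smul_eq_mul]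
          linear_combination (-(T 0).1) * hab
        · simp only [tparam_snd, Prod.fst_add, Prod.smul_fst, Prod.snd_add, Prod.smul_snd,
            smul_eq_mul]
          linear_combination (-(T 0).2) * hab
  · rintro z ⟨st, hst, rfl⟩
    have hrep : tparam T st = ∑ i : Fin 3, (![1 - st.1 - st.2, st.1, st.2] i) • ![T 0, T 1, T 2] i := by
      simp only [Fin.sum_univ_three, Matrix.cons_val_zero, Matrix.cons_val_one, Matrix.head_cons,
        Matrix.cons_val_two, Matrix.tail_cons]
      unfold tparam
      module
    rw [hrep]
    apply (convex_convexHull ℝ (Set.range T)).sum_mem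
    · intro i _
      fin_cases i <;> simp [hst.1, hst.2.1] <;> linarith [hst.2.2]
    · simp [Fin.sum_univ_three]; ring
    · intro i _
      apply subset_convexHull
      fin_cases i <;> exact ⟨_, rfl⟩

lemma isCompact_triangleSet (T : Fin 3 → ℝ × ℝ) : IsCompact (triangleSet T) :=
  (Set.finite_range T).isCompact_convexHull ℝ


lemma coeff_max_lower (u v w2 D : ℝ) (hD : 0 < D) (hid : |4*(u*v) - w2^2| = D) :
    Real.sqrt (D/13) ≤ max |u| (max |v| |u + v - w2|) := by
  set M := max |u| (max |v| |u + v - w2|) with hM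
  have h1 : |u| ≤ M := le_max_left _ _
  have h2 : |v| ≤ M := le_trans (le_max_left _ _) (le_max_right _ _)
  have h3 : |u + v - w2| ≤ M := le_trans (le_max_right _ _) (le_max_right _ _)
  have hM0 : 0 ≤ M := le_trans (abs_nonneg u) h1
  obtain ⟨hu1, hu2⟩ := abs_le.mp h1
  obtain ⟨hv1, hv2⟩ := abs_le.mp h2
  obtain ⟨hw1, hw2⟩ := abs_le.mp h3
  have hDle : D ≤ 13 * M^2 := by
    rcases abs_cases (4*(u*v) - w2^2) with ⟨he, _⟩ | ⟨he, _⟩ <;> rw [← hid, he] <;>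
      nlinarith [mul_nonneg (by linarith : (0:ℝ) ≤ M - u) (by linarith : (0:ℝ) ≤ M - v),
        mul_nonneg (by linarith : (0:ℝ) ≤ M + u) (by linarith : (0:ℝ) ≤ M + v),
        mul_nonneg (by linarith : (0:ℝ) ≤ M - u) (by linarith : (0:ℝ) ≤ M + v),
        mul_nonneg (by linarith : (0:ℝ) ≤ M + u) (by linarith : (0:ℝ) ≤ M - v),
        sq_nonneg w2, sq_nonneg (w2 - 3*M), sq_nonneg (w2 + 3*M)]
  calc Real.sqrt (D/13) ≤ Real.sqrt (M^2) := Real.sqrt_le_sqrt (by linarith)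
  _ = M := Real.sqrt_sq hM0

lemma rect_bound1 (u v w2 M s t : ℝ) (hM : |u| = M) (hv : |v| ≤ M) (hw : |w2| ≤ 3*M)
    (hs : 3/8 ≤ s) (hs' : s ≤ 25/64) (ht : 0 ≤ t) (ht' : t ≤ 1/64) :
    3/64 * M ≤ |u*s*(s-1) + w2*s*t + v*t*(t-1)| := by
  have hM0 : 0 ≤ M := hM ▸ abs_nonneg u
  have hA : |u*s*(s-1)| = M * (s*(1-s)) := by
    rw [abs_mul, abs_mul, hM, abs_of_nonneg (by linarith : (0:ℝ) ≤ s),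
      abs_of_nonpos (by linarith : s - 1 ≤ 0)]
    ring
  have hR : |w2*s*t + v*t*(t-1)| ≤ 3*M*(s*t) + M*t := by
    apply le_trans (abs_add_le _ _)
    have e1 : |w2*s*t| ≤ 3*M*(s*t) := by
      rw [abs_mul, abs_mul, abs_of_nonneg (by linarith : (0:ℝ) ≤ s), abs_of_nonneg ht]
      nlinarith [mul_nonneg (mul_nonneg (by linarith : (0:ℝ) ≤ 3*M - |w2|)
        (by linarith : (0:ℝ) ≤ s)) ht]
    have e2 : |v*t*(t-1)| ≤ M*t := by
      rw [abs_mul, abs_mul, abs_of_nonneg ht, abs_of_nonpos (by linarith : t - 1 ≤ 0)]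
      nlinarith [mul_nonneg (mul_nonneg (by linarith : (0:ℝ) ≤ M - |v|) ht)
        (by linarith : (0:ℝ) ≤ 1 - t), mul_nonneg (mul_nonneg (abs_nonneg v) ht) ht]
    linarith
  have key := abs_sub (u*s*(s-1) + w2*s*t + v*t*(t-1)) (w2*s*t + v*t*(t-1))
  have e : u*s*(s-1) + w2*s*t + v*t*(t-1) - (w2*s*t + v*t*(t-1)) = u*s*(s-1) := by ring
  rw [e] at key
  rw [hA] at key
  nlinarith [mul_nonneg hM0 (mul_nonneg (by linarith : (0:ℝ) ≤ s - 3/8)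
      (by linarith : (0:ℝ) ≤ 5/8 - s)),
    mul_nonneg (mul_nonneg hM0 ht) (by linarith : (0:ℝ) ≤ 25/64 - s),
    mul_nonneg hM0 (by linarith : (0:ℝ) ≤ 1/64 - t)]

lemma rect_bound2 (u v w2 M s t : ℝ) (hM : |v| = M) (hu : |u| ≤ M) (hw : |w2| ≤ 3*M)
    (ht : 3/8 ≤ t) (ht' : t ≤ 25/64) (hs : 0 ≤ s) (hs' : s ≤ 1/64) :
    3/64 * M ≤ |u*s*(s-1) + w2*s*t + v*t*(t-1)| := by
  have h := rect_bound1 v u w2 M t s hM hu hw ht ht' hs hs'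
  have e : v*t*(t-1) + w2*t*s + u*s*(s-1) = u*s*(s-1) + w2*s*t + v*t*(t-1) := by ring
  rw [e] at h
  exact h

lemma rect_bound3 (u v w2 M s t : ℝ) (hM : |u + v - w2| = M) (hu : |u| ≤ M) (hv : |v| ≤ M)
    (hs : 3/8 ≤ s) (hs' : s ≤ 25/64) (ht : 19/32 ≤ t) (ht' : t ≤ 39/64) :
    3/64 * M ≤ |u*s*(s-1) + w2*s*t + v*t*(t-1)| := by
  have hM0 : 0 ≤ M := hM ▸ abs_nonneg _
  obtain ⟨hu1, hu2⟩ := abs_le.mp hu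
  obtain ⟨hv1, hv2⟩ := abs_le.mp hv
  have hw : |w2| ≤ 3*M := by
    have e : w2 = u + v - (u + v - w2) := by ring
    rw [e]
    calc |u + v - (u + v - w2)| ≤ |u + v| + |u + v - w2| := abs_sub _ _
    _ ≤ (|u| + |v|) + |u + v - w2| := by linarith [abs_add_le u v]
    _ ≤ 3*M := by rw [hM]; linarith
  obtain ⟨hw1, hw2⟩ := abs_le.mp hw
  have hA : |(-(s*(1-s))) * (u + v - w2)| = M * (s*(1-s)) := by
    rw [abs_mul, hM, abs_neg, abs_of_nonneg (mul_nonneg (by linarith : (0:ℝ) ≤ s)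
      (by linarith : (0:ℝ) ≤ 1 - s))]
    ring
  have hE : |(-(1-s-t)) * (w2*s + v*(t-s))| ≤ (1-s-t) * (3*M*(25/64) + M*(15/64)) := by
    rw [abs_mul, abs_neg, abs_of_nonneg (by linarith : (0:ℝ) ≤ 1-s-t)]
    have hX : |w2*s + v*(t-s)| ≤ 3*M*(25/64) + M*(15/64) := by
      apply le_trans (abs_add_le _ _)
      have e1 : |w2*s| ≤ 3*M*(25/64) := by
        rw [abs_mul, abs_of_nonneg (by linarith : (0:ℝ) ≤ s)]
        nlinarith [mul_nonneg (by linarith : (0:ℝ) ≤ 3*M - |w2|) (by linarith : (0:ℝ) ≤ s),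
          mul_nonneg (abs_nonneg w2) (by linarith : (0:ℝ) ≤ 25/64 - s)]
      have e2 : |v*(t-s)| ≤ M*(15/64) := by
        rw [abs_mul, abs_of_nonneg (by linarith : (0:ℝ) ≤ t - s)]
        nlinarith [mul_nonneg (by linarith : (0:ℝ) ≤ M - |v|) (by linarith : (0:ℝ) ≤ t - s),
          mul_nonneg (abs_nonneg v) (by linarith : (0:ℝ) ≤ 15/64 - (t - s))]
      linarith
    have h1 : 0 ≤ |w2*s + v*(t-s)| := abs_nonneg _
    nlinarith [mul_nonneg (by linarith : (0:ℝ) ≤ 1-s-t)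
      (by linarith : (0:ℝ) ≤ 3*M*(25/64) + M*(15/64) - |w2*s + v*(t-s)|)]
  have key := abs_sub (u*s*(s-1) + w2*s*t + v*t*(t-1)) ((-(1-s-t)) * (w2*s + v*(t-s)))
  have e : u*s*(s-1) + w2*s*t + v*t*(t-1) - ((-(1-s-t)) * (w2*s + v*(t-s)))
      = (-(s*(1-s))) * (u + v - w2) := by ring
  rw [e] at key
  rw [hA] at key
  nlinarith [mul_nonneg hM0 (mul_nonneg (by linarith : (0:ℝ) ≤ s - 3/8)
      (by linarith : (0:ℝ) ≤ 5/8 - s)),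
    mul_nonneg hM0 (by linarith : (0:ℝ) ≤ (1:ℝ)), hM0]


-- NEW CHUNK E
/-- quadratic form coefficients along edges -/
def qu (A B C : ℝ) (d : ℝ × ℝ) : ℝ := A*d.1^2 + B*d.1*d.2 + C*d.2^2
def qw (A B C : ℝ) (d e : ℝ × ℝ) : ℝ := 2*A*d.1*e.1 + B*(d.1*e.2 + d.2*e.1) + 2*C*d.2*e.2

lemma error_repr (T : Fin 3 → ℝ × ℝ) (hdet : tdet T ≠ 0) (π : ℝ × ℝ → ℝ) (A B C : ℝ)
    (hπ : ∀ z, π z = A*z.1^2 + B*z.1*z.2 + C*z.2^2) :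
    ∃ a b c : ℝ, (∀ z, interp 2 T π z = a*z.1 + b*z.2 + c) ∧
      ∀ st : ℝ × ℝ, π (tparam T st) - interp 2 T π (tparam T st)
        = qu A B C (T 1 - T 0) * st.1 * (st.1-1)
          + qw A B C (T 1 - T 0) (T 2 - T 0) * st.1 * st.2
          + qu A B C (T 2 - T 0) * st.2 * (st.2-1) := by
  obtain ⟨hdeg, hnodes⟩ := interp_two_spec T hdet π
  obtain ⟨a, b, c, haff⟩ := affine_of_isPolyDeg_one hdeg
  have hI : ∀ i : Fin 3, a*(T i).1 + b*(T i).2 + c = π (T i) := by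
    intro i
    rw [← haff]
    apply hnodes
    rw [mem_interpNodes_two]
    fin_cases i
    · left; rfl
    · right; left; rfl
    · right; right; rfl
  have h0 : A*(T 0).1^2 + B*(T 0).1*(T 0).2 + C*(T 0).2^2 = a*(T 0).1 + b*(T 0).2 + c := by
    rw [hI 0, hπ]
  have h1 : A*(T 1).1^2 + B*(T 1).1*(T 1).2 + C*(T 1).2^2 = a*(T 1).1 + b*(T 1).2 + c := by
    rw [hI 1, hπ]
  have h2 : A*(T 2).1^2 + B*(T 2).1*(T 2).2 + C*(T 2).2^2 = a*(T 2).1 + b*(T 2).2 + c := by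
    rw [hI 2, hπ]
  refine ⟨a, b, c, haff, fun st => ?_⟩
  have key := error_formula A B C a b c (T 0).1 (T 0).2 (T 1).1 (T 1).2 (T 2).1 (T 2).2
    st.1 st.2 h0 h1 h2
  rw [hπ, haff, tparam_fst, tparam_snd]
  simp only [qu, qw, Prod.fst_sub, Prod.snd_sub]
  linear_combination key

lemma error_integrable (T : Fin 3 → ℝ × ℝ) (p A B C a b c : ℝ) (hp : 0 ≤ p)
    (π : ℝ × ℝ → ℝ) (hπ : ∀ z, π z = A*z.1^2 + B*z.1*z.2 + C*z.2^2)
    (haff : ∀ z, interp 2 T π z = a*z.1 + b*z.2 + c) :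
    Continuous (fun z : ℝ × ℝ => |π z - interp 2 T π z| ^ p) ∧
      IntegrableOn (fun z : ℝ × ℝ => |π z - interp 2 T π z| ^ p) (triangleSet T) := by
  have heq : (fun z : ℝ × ℝ => |π z - interp 2 T π z| ^ p)
      = fun z : ℝ × ℝ => |(A*z.1^2 + B*z.1*z.2 + C*z.2^2) - (a*z.1 + b*z.2 + c)| ^ p := by
    funext z
    rw [hπ z, haff z]
  rw [heq]
  have hc : Continuous fun z : ℝ × ℝ =>
      |(A*z.1^2 + B*z.1*z.2 + C*z.2^2) - (a*z.1 + b*z.2 + c)| := by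
    fun_prop
  have hcp : Continuous fun z : ℝ × ℝ =>
      |(A*z.1^2 + B*z.1*z.2 + C*z.2^2) - (a*z.1 + b*z.2 + c)| ^ p :=
    hc.rpow_const (fun x => Or.inr hp)
  exact ⟨hcp, hcp.continuousOn.integrableOn_compact (isCompact_triangleSet T)⟩

lemma continuous_tparam (T : Fin 3 → ℝ × ℝ) : Continuous (tparam T) := by
  unfold tparam
  fun_prop

lemma abs_w2_le (u v w2 M : ℝ) (hu : |u| ≤ M) (hv : |v| ≤ M) (hw : |u + v - w2| ≤ M) :
    |w2| ≤ 3*M := by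
  have e : w2 = u + v - (u + v - w2) := by ring
  rw [e]
  calc |u + v - (u + v - w2)| ≤ |u + v| + |u + v - w2| := abs_sub _ _
  _ ≤ (|u| + |v|) + |u + v - w2| := by linarith [abs_add_le u v]
  _ ≤ 3*M := by linarith

lemma integral_lower (p : ℝ) (hp : 1 ≤ p) (π : ℝ × ℝ → ℝ) (A B C : ℝ)
    (hπ : ∀ z, π z = A*z.1^2 + B*z.1*z.2 + C*z.2^2)
    (hD : 4*A*C - B^2 ≠ 0) (T : Fin 3 → ℝ × ℝ) (hdet2 : |tdet T| = 2) :
    (3/64 * Real.sqrt (|(4*A*C - B^2) * 4| / 13)) ^ p * (1/2048)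
      ≤ ∫ z in triangleSet T, |π z - interp 2 T π z| ^ p := by
  have hdet : tdet T ≠ 0 := by
    intro h
    rw [h] at hdet2
    simp at hdet2
  obtain ⟨a, b, c, haff, herr⟩ := error_repr T hdet π A B C hπ
  set u := qu A B C (T 1 - T 0) with hu
  set v := qu A B C (T 2 - T 0) with hv
  set w2 := qw A B C (T 1 - T 0) (T 2 - T 0) with hw2
  set D := |(4*A*C - B^2) * 4| with hDdef
  have hD0 : 0 < D := abs_pos.mpr (mul_ne_zero hD (by norm_num))
  have hsq : tdet T ^ 2 = 4 := by
    rw [← sq_abs, hdet2]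
    norm_num
  have hiden : 4*(u*v) - w2^2 = (4*A*C - B^2) * (tdet T)^2 := by
    simp only [hu, hv, hw2, qu, qw, Prod.fst_sub, Prod.snd_sub, tdet]
    ring
  have hid : |4*(u*v) - w2^2| = D := by
    rw [hiden, hsq]
  have hMlow := coeff_max_lower u v w2 D hD0 hid
  set M := max |u| (max |v| |u + v - w2|) with hM
  set δ := Real.sqrt (D/13) with hδ
  have hδ0 : 0 < δ := Real.sqrt_pos.mpr (by positivity)
  have hM0 : 0 < M := lt_of_lt_of_le hδ0 hMlow
  have hu' : |u| ≤ M := le_max_left _ _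
  have hv' : |v| ≤ M := le_trans (le_max_left _ _) (le_max_right _ _)
  have hw' : |u + v - w2| ≤ M := le_trans (le_max_right _ _) (le_max_right _ _)
  have hwabs : |w2| ≤ 3*M := abs_w2_le u v w2 M hu' hv' hw'
  -- choose a good rectangle
  obtain ⟨R, hRcomp, hRsub, hRvol, hpt⟩ :
      ∃ R : Set (ℝ × ℝ), IsCompact R ∧ R ⊆ stdTri ∧ volume R = ENNReal.ofReal (1/4096) ∧
        ∀ st ∈ R, 3/64 * M ≤ |u*st.1*(st.1-1) + w2*st.1*st.2 + v*st.2*(st.2-1)| := by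
    rcases max_choice |u| (max |v| |u + v - w2|) with h | h
    · refine ⟨Set.Icc (3/8) (25/64) ×ˢ Set.Icc 0 (1/64), isCompact_Icc.prod isCompact_Icc, ?_, ?_, ?_⟩
      · rintro ⟨s, t⟩ ⟨⟨hs1, hs2⟩, ht1, ht2⟩
        exact ⟨by linarith, by linarith, by norm_num at *; linarith⟩
      · rw [Measure.volume_eq_prod ℝ ℝ, Measure.prod_prod, Real.volume_Icc, Real.volume_Icc,
          ← ENNReal.ofReal_mul (by norm_num)]
        norm_num
      · rintro ⟨s, t⟩ ⟨⟨hs1, hs2⟩, ht1, ht2⟩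
        exact rect_bound1 u v w2 M s t h.symm hv' hwabs hs1 hs2 ht1 ht2
    rcases max_choice |v| |u + v - w2| with h2 | h2
    · have hMv : |v| = M := by rw [hM, h, h2]
      refine ⟨Set.Icc 0 (1/64) ×ˢ Set.Icc (3/8) (25/64), isCompact_Icc.prod isCompact_Icc, ?_, ?_, ?_⟩
      · rintro ⟨s, t⟩ ⟨⟨hs1, hs2⟩, ht1, ht2⟩
        exact ⟨by linarith, by linarith, by norm_num at *; linarith⟩
      · rw [Measure.volume_eq_prod ℝ ℝ, Measure.prod_prod, Real.volume_Icc, Real.volume_Icc,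
          ← ENNReal.ofReal_mul (by norm_num)]
        norm_num
      · rintro ⟨s, t⟩ ⟨⟨hs1, hs2⟩, ht1, ht2⟩
        exact rect_bound2 u v w2 M s t hMv hu' hwabs ht1 ht2 hs1 hs2
    · have hMv : |u + v - w2| = M := by rw [hM, h, h2]
      refine ⟨Set.Icc (3/8) (25/64) ×ˢ Set.Icc (19/32) (39/64), isCompact_Icc.prod isCompact_Icc, ?_, ?_, ?_⟩
      · rintro ⟨s, t⟩ ⟨⟨hs1, hs2⟩, ht1, ht2⟩
        exact ⟨by linarith, by linarith, by norm_num at *; linarith⟩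
      · rw [Measure.volume_eq_prod ℝ ℝ, Measure.prod_prod, Real.volume_Icc, Real.volume_Icc,
          ← ENNReal.ofReal_mul (by norm_num)]
        norm_num
      · rintro ⟨s, t⟩ ⟨⟨hs1, hs2⟩, ht1, ht2⟩
        exact rect_bound3 u v w2 M s t hMv hu' hv' hs1 hs2 ht1 ht2
  -- set up the integral comparison
  set f : ℝ × ℝ → ℝ := fun z => |π z - interp 2 T π z| ^ p with hf
  obtain ⟨hfc, hfi⟩ := error_integrable T p A B C a b c (by linarith) π hπ haff
  set S' : Set (ℝ × ℝ) := tparam T '' R with hS'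
  have hS'sub : S' ⊆ triangleSet T := by
    rw [triangleSet_eq]
    exact Set.image_mono hRsub
  have hS'meas : MeasurableSet S' :=
    (hRcomp.image (continuous_tparam T)).measurableSet
  have hS'vol : volume S' = ENNReal.ofReal 2 * ENNReal.ofReal (1/4096) := by
    rw [hS', volume_tparam_image, hdet2, hRvol]
  have hc0 : (0:ℝ) ≤ 3/64 * δ := by positivity
  have hptz : ∀ z ∈ S', (3/64 * δ) ^ p ≤ f z := by
    rintro z ⟨st, hst, rfl⟩
    apply Real.rpow_le_rpow hc0 _ (by linarith)
    calc 3/64 * δ ≤ 3/64 * M := by linarith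
    _ ≤ |u*st.1*(st.1-1) + w2*st.1*st.2 + v*st.2*(st.2-1)| := hpt st hst
    _ = |π (tparam T st) - interp 2 T π (tparam T st)| := by
        rw [herr st]
  have hkey := setIntegral_ge_of_const_le (μ := volume) hS'meas
    (by rw [hS'vol]; exact ENNReal.mul_ne_top ENNReal.ofReal_ne_top ENNReal.ofReal_ne_top)
    hptz (hfi.mono_set hS'sub)
  have htoReal : (volume S').toReal = 1/2048 := by
    rw [hS'vol, ENNReal.toReal_mul, ENNReal.toReal_ofReal (by norm_num),
      ENNReal.toReal_ofReal (by norm_num)]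
    norm_num
  rw [measureReal_def, htoReal, smul_eq_mul, mul_comm (1/2048 : ℝ)] at hkey
  calc (3/64 * δ) ^ p * (1/2048) ≤ ∫ z in S', f z := hkey
  _ ≤ ∫ z in triangleSet T, f z := by
      apply setIntegral_mono_set hfi
      · exact Filter.Eventually.of_forall fun z => Real.rpow_nonneg (abs_nonneg _) p
      · exact HasSubset.Subset.eventuallyLE hS'sub


-- CHUNK F
lemma volume_triangleSet_le (T : Fin 3 → ℝ × ℝ) (hdet2 : |tdet T| = 2) :
    (volume (triangleSet T)).toReal ≤ 2 := by
  rw [triangleSet_eq, volume_tparam_image, hdet2]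
  have h1 : volume stdTri ≤ 1 := by
    have hsub : stdTri ⊆ Set.Icc (0:ℝ) 1 ×ˢ Set.Icc (0:ℝ) 1 := by
      rintro ⟨s, t⟩ ⟨h1, h2, h3⟩
      exact ⟨⟨h1, by dsimp at *; linarith⟩, ⟨h2, by dsimp at *; linarith⟩⟩
    calc volume stdTri ≤ volume (Set.Icc (0:ℝ) 1 ×ˢ Set.Icc (0:ℝ) 1) := measure_mono hsub
    _ = 1 := by
        rw [Measure.volume_eq_prod ℝ ℝ, Measure.prod_prod, Real.volume_Icc]
        norm_num
  calc (ENNReal.ofReal 2 * volume stdTri).toReal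
      ≤ (ENNReal.ofReal 2 * 1).toReal := by
        apply ENNReal.toReal_mono
        · simp
        · exact mul_le_mul_right h1 _
  _ = 2 := by simp

lemma integral_upper (p : ℝ) (hp : 1 ≤ p) (π : ℝ × ℝ → ℝ) (A B C a b c cb : ℝ)
    (hπ : ∀ z, π z = A*z.1^2 + B*z.1*z.2 + C*z.2^2)
    (T : Fin 3 → ℝ × ℝ) (hdet2 : |tdet T| = 2)
    (haff : ∀ z, interp 2 T π z = a*z.1 + b*z.2 + c) (hcb : 0 ≤ cb)
    (hbd : ∀ z ∈ triangleSet T, |π z - interp 2 T π z| ≤ cb) :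
    ∫ z in triangleSet T, |π z - interp 2 T π z| ^ p ≤ cb ^ p * 2 := by
  obtain ⟨hfc, hfi⟩ := error_integrable T p A B C a b c (by linarith) π hπ haff
  have hmeas : MeasurableSet (triangleSet T) := (isCompact_triangleSet T).measurableSet
  have hfin : volume (triangleSet T) ≠ ⊤ := (isCompact_triangleSet T).measure_lt_top.ne
  have step1 : ∫ z in triangleSet T, |π z - interp 2 T π z| ^ p
      ≤ ∫ _z in triangleSet T, cb ^ p := by
    apply setIntegral_mono_on hfi (integrableOn_const hfin) hmeas
    intro z hz
    exact Real.rpow_le_rpow (abs_nonneg _) (hbd z hz) (by linarith)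
  rw [setIntegral_const, measureReal_def] at step1
  have : (volume (triangleSet T)).toReal • cb ^ p ≤ cb ^ p * 2 := by
    rw [smul_eq_mul, mul_comm]
    apply mul_le_mul_of_nonneg_left (volume_triangleSet_le T hdet2)
      (Real.rpow_nonneg hcb p)
  linarith

set_option maxHeartbeats 1000000 in
lemma exists_small_err (p : ℝ) (hp : 1 ≤ p) (π : ℝ × ℝ → ℝ) (l α β : ℝ)
    (hl : ∀ z : ℝ × ℝ, π z = l * (α * z.1 + β * z.2) ^ 2) (hs : α^2 + β^2 ≠ 0)
    (ε : ℝ) (hε : 0 < ε) :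
    ∃ T : Fin 3 → ℝ × ℝ, |tdet T| = 2 ∧ lpErr 2 p T π ≤ ε := by
  have hp0 : (0:ℝ) < p := by linarith
  have hS0 : 0 < α^2 + β^2 := lt_of_le_of_ne (by positivity) (Ne.symm hs)
  set N : ℝ := Real.sqrt (2*|l|/ε) + 1 with hN
  have hN1 : 1 ≤ N := by
    rw [hN]
    have := Real.sqrt_nonneg (2*|l|/ε)
    linarith
  have hN0 : 0 < N := by linarith
  have hN2 : 2*|l| ≤ ε*N^2 := by
    have h1 : Real.sqrt (2*|l|/ε) ^ 2 = 2*|l|/ε := Real.sq_sqrt (by positivity)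
    have h2 : (2*|l|/ε) * ε = 2*|l| := by field_simp
    rw [hN]
    nlinarith [h1, h2, mul_nonneg hε.le
      (by positivity : (0:ℝ) ≤ 2*Real.sqrt (2*|l|/ε) + 1)]
  set S : ℝ := α^2 + β^2 with hSdef
  set T : Fin 3 → ℝ × ℝ := ![(0, 0), (N*β, -(N*α)), (2*α/(N*S), 2*β/(N*S))] with hT
  have hT0f : (T 0).1 = 0 := rfl
  have hT0s : (T 0).2 = 0 := rfl
  have hT1f : (T 1).1 = N*β := rfl
  have hT1s : (T 1).2 = -(N*α) := rfl
  have hT2f : (T 2).1 = 2*α/(N*S) := rfl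
  have hT2s : (T 2).2 = 2*β/(N*S) := rfl
  have hdet : tdet T = 2 := by
    unfold tdet
    rw [hT0f, hT0s, hT1f, hT1s, hT2f, hT2s, hSdef]
    field_simp [show α^2+β^2 ≠ 0 from hs, show β^2+α^2 ≠ 0 by rw [add_comm]; exact hs]
    ring
  have hdet2 : |tdet T| = 2 := by rw [hdet]; norm_num
  have hdet' : tdet T ≠ 0 := by rw [hdet]; norm_num
  set A := l*α^2 with hA
  set B := 2*l*α*β with hB
  set C := l*β^2 with hC
  have hπ' : ∀ z : ℝ × ℝ, π z = A*z.1^2 + B*z.1*z.2 + C*z.2^2 := by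
    intro z
    rw [hl z, hA, hB, hC]
    ring
  obtain ⟨a, b, c, haff, herr⟩ := error_repr T hdet' π A B C hπ'
  have hu0 : qu A B C (T 1 - T 0) = 0 := by
    simp only [qu, hA, hB, hC, Prod.fst_sub, Prod.snd_sub]
    rw [hT0f, hT0s, hT1f, hT1s]
    ring
  have hw0 : qw A B C (T 1 - T 0) (T 2 - T 0) = 0 := by
    simp only [qw, hA, hB, hC, Prod.fst_sub, Prod.snd_sub]
    rw [hT0f, hT0s, hT1f, hT1s, hT2f, hT2s]
    field_simp
    ring
  have hv4 : qu A B C (T 2 - T 0) = 4*l/N^2 := by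
    simp only [qu, hA, hB, hC, Prod.fst_sub, Prod.snd_sub]
    rw [hT0f, hT0s, hT2f, hT2s, hSdef]
    field_simp [show α^2+β^2 ≠ 0 from hs, show β^2+α^2 ≠ 0 by rw [add_comm]; exact hs]
    ring
  set cb : ℝ := |l|/N^2 with hcb
  have hcb0 : 0 ≤ cb := by positivity
  have hbd : ∀ z ∈ triangleSet T, |π z - interp 2 T π z| ≤ cb := by
    intro z hz
    rw [triangleSet_eq] at hz
    obtain ⟨st, hst, rfl⟩ := hz
    obtain ⟨h1, h2, h3⟩ := hst
    rw [herr st, hu0, hw0, hv4]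
    have hre : (0:ℝ)*st.1*(st.1-1) + 0*st.1*st.2 + 4*l/N^2*st.2*(st.2-1)
        = 4*l/N^2*st.2*(st.2-1) := by ring
    rw [hre]
    have habs : |4*l/N^2*st.2*(st.2-1)| = |l|/N^2 * (4*(st.2*(1-st.2))) := by
      rw [abs_mul, abs_mul, abs_div, abs_of_nonneg (by positivity : (0:ℝ) ≤ N^2),
        abs_of_nonneg h2, abs_of_nonpos (by linarith : st.2 - 1 ≤ 0), abs_mul]
      rw [abs_of_nonneg (by norm_num : (0:ℝ) ≤ 4)]
      ring
    rw [habs, hcb]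
    have h4 : 4*(st.2*(1-st.2)) ≤ 1 := by nlinarith [sq_nonneg (1 - 2*st.2)]
    have h5 : (0:ℝ) ≤ |l|/N^2 := by positivity
    nlinarith [mul_nonneg h2 (by linarith : (0:ℝ) ≤ 1 - st.2)]
  refine ⟨T, hdet2, ?_⟩
  have hint := integral_upper p hp π A B C a b c cb hπ' T hdet2 haff hcb0 hbd
  have hint0 : 0 ≤ ∫ z in triangleSet T, |π z - interp 2 T π z| ^ p :=
    integral_nonneg fun z => Real.rpow_nonneg (abs_nonneg _) p
  have step : lpErr 2 p T π ≤ (cb ^ p * 2) ^ (1/p) := by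
    unfold lpErr
    exact Real.rpow_le_rpow hint0 hint (by positivity)
  have heq : (cb ^ p * 2) ^ (1/p) = cb * 2 ^ (1/p) := by
    rw [Real.mul_rpow (Real.rpow_nonneg hcb0 p) (by norm_num), ← Real.rpow_mul hcb0,
      mul_one_div_cancel (ne_of_gt hp0), Real.rpow_one]
  have h2p : (2:ℝ) ^ (1/p) ≤ 2 := by
    calc (2:ℝ) ^ (1/p) ≤ 2 ^ (1:ℝ) :=
      Real.rpow_le_rpow_of_exponent_le (by norm_num) (by rw [div_le_one hp0]; linarith)
    _ = 2 := Real.rpow_one 2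
  have hfin : cb * 2 ≤ ε := by
    rw [hcb, div_mul_eq_mul_div, mul_comm]
    apply (div_le_iff₀ (by positivity)).mpr
    linarith
  calc lpErr 2 p T π ≤ (cb ^ p * 2) ^ (1/p) := step
  _ = cb * 2 ^ (1/p) := heq
  _ ≤ cb * 2 := mul_le_mul_of_nonneg_left h2p hcb0
  _ ≤ ε := hfin



lemma lpErr_nonneg (p : ℝ) (T : Fin 3 → ℝ × ℝ) (π : ℝ × ℝ → ℝ) : 0 ≤ lpErr 2 p T π :=
  Real.rpow_nonneg (integral_nonneg fun z => Real.rpow_nonneg (abs_nonneg _) p) _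

lemma triArea_tdet (T : Fin 3 → ℝ × ℝ) : triArea T = |tdet T| / 2 := rfl

def T₀ : Fin 3 → ℝ × ℝ := ![(0, 0), (2, 0), (0, 1)]

lemma T₀_area : triArea T₀ = 1 := by
  have h1 : (T₀ 1).1 = 2 := rfl
  have h2 : (T₀ 1).2 = 0 := rfl
  have h3 : (T₀ 2).1 = 0 := rfl
  have h4 : (T₀ 2).2 = 1 := rfl
  have h5 : (T₀ 0).1 = 0 := rfl
  have h6 : (T₀ 0).2 = 0 := rfl
  unfold triArea
  rw [h1, h2, h3, h4, h5, h6]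
  norm_num

/-- K_{2,p} vanishes exactly on degenerate quadratic forms:
K_{2,p}(π) = 0 iff π(x,y) = λ(αx + βy)². -/
theorem stmt14 (p : ℝ) (hp : 1 ≤ p) (π : ℝ × ℝ → ℝ) (hπ : IsForm 2 π) :
    Kfun 2 p π = 0 ↔
      ∃ l α β : ℝ, ∀ z : ℝ × ℝ, π z = l * (α * z.1 + β * z.2) ^ 2 := by
  obtain ⟨co, hco⟩ := hπ
  set A := co 2 with hA
  set B := co 1 with hB
  set C := co 0 with hC
  have hABC : ∀ z : ℝ × ℝ, π z = A*z.1^2 + B*z.1*z.2 + C*z.2^2 := by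
    intro z
    rw [hco z]
    unfold formEval
    rw [Fin.sum_univ_three]
    norm_num
    ring
  have hbdd : BddBelow { e | ∃ T : Fin 3 → ℝ × ℝ, triArea T = 1 ∧ e = lpErr 2 p T π } := by
    refine ⟨0, ?_⟩
    rintro e ⟨T, _, rfl⟩
    exact lpErr_nonneg p T π
  have hne : { e | ∃ T : Fin 3 → ℝ × ℝ, triArea T = 1 ∧ e = lpErr 2 p T π }.Nonempty :=
    ⟨lpErr 2 p T₀ π, T₀, T₀_area, rfl⟩
  constructor
  · intro h0
    by_contra hno
    push_neg at hno
    have hD : 4*A*C - B^2 ≠ 0 := by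
      intro hq
      by_cases hA0 : A = 0
      · have hB0 : B = 0 := by
          have : B^2 = 0 := by rw [hA0] at hq; linarith
          exact pow_eq_zero_iff (by norm_num) |>.mp this
        obtain ⟨z, hz⟩ := hno C 0 1
        exact hz (by rw [hABC z, hA0, hB0]; ring)
      · obtain ⟨z, hz⟩ := hno (1/A) A (B/2)
        apply hz
        rw [hABC z]
        field_simp
        linear_combination (z.2^2) * hq
    set κ := (3/64 * Real.sqrt (|(4*A*C - B^2) * 4| / 13)) ^ p * (1/2048) with hκ
    have hs0 : 0 < Real.sqrt (|(4*A*C - B^2) * 4| / 13) := by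
      apply Real.sqrt_pos.mpr
      have : (0:ℝ) < |(4*A*C - B^2) * 4| := abs_pos.mpr (mul_ne_zero hD (by norm_num))
      linarith
    have hκ0 : 0 < κ := by
      rw [hκ]
      have : (0:ℝ) < (3/64 * Real.sqrt (|(4*A*C - B^2) * 4| / 13)) ^ p :=
        Real.rpow_pos_of_pos (by linarith) p
      linarith
    have hlow : κ ^ (1/p) ≤ Kfun 2 p π := by
      unfold Kfun
      apply le_csInf hne
      rintro e ⟨T, hT, rfl⟩
      have hdet2 : |tdet T| = 2 := by
        rw [triArea_tdet] at hT
        linarith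
      unfold lpErr
      exact Real.rpow_le_rpow (le_of_lt hκ0)
        (integral_lower p hp π A B C hABC hD T hdet2) (by positivity)
    have hpos : 0 < κ ^ (1/p) := Real.rpow_pos_of_pos hκ0 _
    rw [h0] at hlow
    linarith
  · rintro ⟨l, α, β, hl⟩
    obtain ⟨l', α', β', hl', hs'⟩ : ∃ l' α' β' : ℝ,
        (∀ z : ℝ × ℝ, π z = l'*(α'*z.1 + β'*z.2)^2) ∧ α'^2 + β'^2 ≠ 0 := by
      by_cases h : α = 0 ∧ β = 0
      · exact ⟨0, 1, 0, fun z => by rw [hl z, h.1, h.2]; ring, by norm_num⟩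
      · refine ⟨l, α, β, hl, ?_⟩
        intro hzero
        apply h
        constructor
        · nlinarith [sq_nonneg α, sq_nonneg β]
        · nlinarith [sq_nonneg α, sq_nonneg β]
    apply le_antisymm
    · apply le_of_forall_pos_le_add
      intro ε hε
      obtain ⟨T, hdet2, herr⟩ := exists_small_err p hp π l' α' β' hl' hs' ε hε
      have hTarea : triArea T = 1 := by
        rw [triArea_tdet, hdet2]
        norm_num
      calc Kfun 2 p π ≤ lpErr 2 p T π := csInf_le hbdd ⟨T, hTarea, rfl⟩
      _ ≤ ε := herr
      _ = 0 + ε := by ring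
    · apply le_csInf hne
      rintro e ⟨T, hT, rfl⟩
      exact lpErr_nonneg p T π


end
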